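/- Let H ≤ G = ∏_{x∈E} Γ_x. An element x ∈ E is a coloop of P(H) (meaning |H| = |H_{E\{x\}}| · |Γ_x|) if and only if every irreducible constituent ρ = ⊗_{y∈E} ρ_y of the permutation representation ℂ[G/H] has ρ_x trivial. -/

import Mathlib

/-- Coordinate projection of a product of groups onto the coordinates in `S`. -/
def proj {E : Type} (Γ : E → Type) [∀ x, Group (Γ x)] (S : Finset E) :
    (∀ x, Γ x) →* (∀ x : S, Γ x) :=
  Pi.monoidHom fun i => Pi.evalMonoidHom Γ i

/-- A linear map intertwining two representations. -/
def IsEquivariant {k G V W : Type} [CommSemiring k] [Monoid G]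
    [AddCommMonoid V] [Module k V] [AddCommMonoid W] [Module k W]
    (ρ : Representation k G V) (σ : Representation k G W) (f : V →ₗ[k] W) : Prop :=
  ∀ g : G, f ∘ₗ ρ g = σ g ∘ₗ f

/-- `ρ` occurs in `σ` if there is a nonzero equivariant map `ρ → σ`. -/
def Occurs {k G V W : Type} [CommSemiring k] [Monoid G]
    [AddCommMonoid V] [Module k V] [AddCommMonoid W] [Module k W]
    (ρ : Representation k G V) (σ : Representation k G W) : Prop :=
  ∃ f : V →ₗ[k] W, f ≠ 0 ∧ IsEquivariant ρ σ f

/-- Irreducibility of a representation. -/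
def IsIrred {k G V : Type} [CommSemiring k] [Monoid G]
    [AddCommMonoid V] [Module k V] (ρ : Representation k G V) : Prop :=
  Nontrivial V ∧
    ∀ p : Submodule k V, (∀ g : G, ∀ v ∈ p, ρ g v ∈ p) → p = ⊥ ∨ p = ⊤

section RepAux

open Module

variable {G V : Type} [Group G] [AddCommGroup V] [Module ℂ V]

/-- A submodule invariant under a representation. -/
def Invt (σ : Representation ℂ G V) (p : Submodule ℂ V) : Prop :=
  ∀ g : G, ∀ v ∈ p, σ g v ∈ p

lemma invt_maschke [Fintype G] (σ : Representation ℂ G V) (p : Submodule ℂ V)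
    (hp : Invt σ p) : ∃ q : Submodule ℂ V, Invt σ q ∧ IsCompl p q := by
  obtain ⟨q₀, hq₀⟩ := p.exists_isCompl
  set pr : V →ₗ[ℂ] V := p.subtype ∘ₗ p.linearProjOfIsCompl q₀ hq₀ with hprdef
  have hpr_mem : ∀ w, pr w ∈ p := fun w => (p.linearProjOfIsCompl q₀ hq₀ w).2
  have hpr_id : ∀ w ∈ p, pr w = w := by
    intro w hw
    have h1 : p.linearProjOfIsCompl q₀ hq₀ ((⟨w, hw⟩ : p) : V) = ⟨w, hw⟩ :=
      Submodule.linearProjOfIsCompl_apply_left hq₀ ⟨w, hw⟩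
    simpa [hprdef] using congrArg (Subtype.val) h1
  set c : ℂ := (Fintype.card G : ℂ)⁻¹ with hc
  set π : V →ₗ[ℂ] V := c • ∑ g : G, σ g⁻¹ ∘ₗ pr ∘ₗ σ g with hπ
  have hπ_apply : ∀ v, π v = c • ∑ g : G, σ g⁻¹ (pr (σ g v)) := by
    intro v; simp [hπ, LinearMap.sum_apply]
  have hcard : (Fintype.card G : ℂ) ≠ 0 := Nat.cast_ne_zero.2 Fintype.card_ne_zero
  have hmem : ∀ v, π v ∈ p := by
    intro v; rw [hπ_apply]
    exact Submodule.smul_mem _ _ (Submodule.sum_mem _ fun g _ => hp g⁻¹ _ (hpr_mem _))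
  have hfix : ∀ g : G, ∀ v, σ g⁻¹ (σ g v) = v := by
    intro g v
    rw [← Module.End.mul_apply, ← map_mul, inv_mul_cancel, map_one, Module.End.one_apply]
  have hid : ∀ v ∈ p, π v = v := by
    intro v hv
    rw [hπ_apply]
    have h2 : ∀ g : G, σ g⁻¹ (pr (σ g v)) = v := fun g => by
      rw [hpr_id _ (hp g v hv), hfix]
    simp only [h2, Finset.sum_const, Finset.card_univ]
    rw [← Nat.cast_smul_eq_nsmul ℂ, smul_smul, hc, inv_mul_cancel₀ hcard, one_smul]
  have hcomm : ∀ h : G, ∀ v, σ h (π v) = π (σ h v) := by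
    intro h v
    rw [hπ_apply, hπ_apply, map_smul, map_sum]
    congr 1
    refine Fintype.sum_equiv (Equiv.mulRight h⁻¹) _ _ fun u => ?_
    have e1 : σ ((u * h⁻¹) : G) (σ h v) = σ u v := by
      rw [← Module.End.mul_apply, ← map_mul, inv_mul_cancel_right]
    have e2 : ∀ w, σ ((u * h⁻¹)⁻¹ : G) w = σ h (σ u⁻¹ w) := by
      intro w
      rw [mul_inv_rev, inv_inv, map_mul, Module.End.mul_apply]
    simp only [Equiv.coe_mulRight, e1, e2]
  refine ⟨LinearMap.ker π, ?_, ?_⟩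
  · intro g v hv
    rw [LinearMap.mem_ker, ← hcomm, LinearMap.mem_ker.1 hv, map_zero]
  · constructor
    · rw [disjoint_iff]
      refine (Submodule.eq_bot_iff _).2 fun v hv => ?_
      obtain ⟨hv1, hv2⟩ := Submodule.mem_inf.1 hv
      rw [← hid v hv1, LinearMap.mem_ker.1 hv2]
    · rw [codisjoint_iff, eq_top_iff]
      intro v _
      refine Submodule.mem_sup.2 ⟨π v, hmem v, v - π v, ?_, by abel⟩
      rw [LinearMap.mem_ker, map_sub, hid _ (hmem v), sub_self]

lemma exists_min_invt_not_fixed [Fintype G] [FiniteDimensional ℂ V]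
    (σ : Representation ℂ G V) (g₀ : G) (hg : σ g₀ ≠ 1) :
    ∃ W : Submodule ℂ V, Invt σ W ∧ Nontrivial W ∧
      (∀ W' ≤ W, Invt σ W' → W' = ⊥ ∨ W' = W) ∧ ∃ w ∈ W, σ g₀ w ≠ w := by
  classical
  set A : Set (Submodule ℂ V) := {U | Invt σ U ∧ ∀ v ∈ U, σ g₀ v = v} with hA
  set T : Submodule ℂ V := sSup A with hT
  have hT_fix : ∀ v ∈ T, σ g₀ v = v := by
    intro v hv
    have hle : T ≤ LinearMap.ker (σ g₀ - LinearMap.id) := by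
      refine sSup_le fun U hU => fun w hw => ?_
      rw [LinearMap.mem_ker, LinearMap.sub_apply, LinearMap.id_apply, sub_eq_zero]
      exact hU.2 w hw
    have := hle hv
    rw [LinearMap.mem_ker, LinearMap.sub_apply, LinearMap.id_apply, sub_eq_zero] at this
    exact this
  have hT_ne : T ≠ ⊤ := by
    intro h
    apply hg
    refine LinearMap.ext fun v => ?_
    have : v ∈ T := h ▸ Submodule.mem_top
    simpa using hT_fix v this
  have hT_invt : Invt σ T := by
    intro g v hv
    rw [hT, sSup_eq_iSup'] at hv ⊢
    refine Submodule.iSup_induction _ (motive := fun w => σ g w ∈ ⨆ U : A, (U : Submodule ℂ V)) hv ?_ ?_ ?_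
    · intro U w hw
      show σ g w ∈ _
      exact le_iSup (fun U : A => (U : Submodule ℂ V)) U (U.2.1 g w hw)
    · show σ g (0 : V) ∈ _
      rw [map_zero]; exact Submodule.zero_mem _
    · intro a b ha hb
      show σ g (a + b) ∈ _
      rw [map_add]; exact Submodule.add_mem _ ha hb
  obtain ⟨q, hq_invt, hq_compl⟩ := invt_maschke σ T hT_invt
  have hq_ne : q ≠ ⊥ := by
    intro h
    apply hT_ne
    have := codisjoint_iff.1 hq_compl.codisjoint
    rwa [h, sup_bot_eq] at this
  set N : Set ℕ := {n | ∃ W : Submodule ℂ V, W ≤ q ∧ Invt σ W ∧ W ≠ ⊥ ∧ finrank ℂ W = n}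
    with hN
  have hN_ne : N.Nonempty := ⟨finrank ℂ q, q, le_rfl, hq_invt, hq_ne, rfl⟩
  obtain ⟨W, hWq, hW_invt, hW_ne, hW_rank⟩ := Nat.sInf_mem hN_ne
  have hmin : ∀ W' ≤ W, Invt σ W' → W' = ⊥ ∨ W' = W := by
    intro W' hle hinvt
    by_cases h' : W' = ⊥
    · exact Or.inl h'
    · right
      have hmem : finrank ℂ W' ∈ N := ⟨W', hle.trans hWq, hinvt, h', rfl⟩
      exact Submodule.eq_of_le_of_finrank_le hle (hW_rank ▸ Nat.sInf_le hmem)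
  refine ⟨W, hW_invt, Submodule.nontrivial_iff_ne_bot.2 hW_ne, hmin, ?_⟩
  by_contra hfix
  push_neg at hfix
  have hWA : W ∈ A := ⟨hW_invt, hfix⟩
  have hWT : W ≤ T := le_sSup hWA
  exact hW_ne (le_bot_iff.1 (hq_compl.disjoint hWT hWq))

/-- The restriction of a representation to an invariant submodule. -/
def resRep (σ : Representation ℂ G V) (W : Submodule ℂ V) (hW : Invt σ W) :
    Representation ℂ G W where
  toFun g := (σ g).restrict (hW g)
  map_one' := by
    refine LinearMap.ext fun v => Subtype.ext ?_
    simp [LinearMap.restrict_apply]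
  map_mul' g h := by
    refine LinearMap.ext fun v => Subtype.ext ?_
    simp [LinearMap.restrict_apply, map_mul]

lemma resRep_apply (σ : Representation ℂ G V) (W : Submodule ℂ V) (hW : Invt σ W)
    (g : G) (w : W) : ((resRep σ W hW g w : W) : V) = σ g (w : V) := rfl

end RepAux

section GroupAux

variable {E : Type} [Fintype E] [DecidableEq E] {Γ : E → Type} [∀ y, Group (Γ y)]
  [∀ y, Fintype (Γ y)]

lemma mem_ker_proj_iff (x : E) (g : ∀ y, Γ y) :
    g ∈ (proj Γ (Finset.univ.erase x)).ker ↔ ∀ y, y ≠ x → g y = 1 := by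
  rw [MonoidHom.mem_ker]
  constructor
  · intro h y hy
    have := congrFun h ⟨y, Finset.mem_erase.2 ⟨hy, Finset.mem_univ y⟩⟩
    exact this
  · intro h
    funext y
    exact h y.1 (Finset.mem_erase.1 y.2).1

lemma card_ker_proj (x : E) :
    Nat.card ((proj Γ (Finset.univ.erase x)).ker) = Nat.card (Γ x) := by
  refine Nat.card_congr ⟨fun g => g.1 x, fun a => ⟨Pi.mulSingle x a, ?_⟩, ?_, ?_⟩
  · rw [mem_ker_proj_iff]
    intro y hy
    exact Pi.mulSingle_eq_of_ne hy a
  · intro g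
    refine Subtype.ext (funext fun y => ?_)
    show (Pi.mulSingle x ((g : ∀ y, Γ y) x) : ∀ y, Γ y) y = (g : ∀ y, Γ y) y
    by_cases h : y = x
    · subst h; exact Pi.mulSingle_eq_same y ((g : ∀ y, Γ y) y)
    · rw [Pi.mulSingle_eq_of_ne h, ((mem_ker_proj_iff x g.1).1 g.2 y h)]
  · intro a
    show (Pi.mulSingle x a : ∀ y, Γ y) x = a
    exact Pi.mulSingle_eq_same x a

lemma card_count_iff (x : E) (H : Subgroup (∀ y, Γ y)) :
    (Nat.card H =
        Nat.card (Subgroup.map (proj Γ (Finset.univ.erase x)) H) * Nat.card (Γ x)) ↔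
      (proj Γ (Finset.univ.erase x)).ker ≤ H := by
  classical
  set S := Finset.univ.erase x
  set K := (proj Γ S).ker with hK
  set ψ := (proj Γ S).comp H.subtype with hψ
  have hrange : ψ.range = Subgroup.map (proj Γ S) H := by
    ext a
    simp only [hψ, MonoidHom.mem_range, MonoidHom.comp_apply, Subgroup.mem_map]
    constructor
    · rintro ⟨h, rfl⟩; exact ⟨h.1, h.2, rfl⟩
    · rintro ⟨g, hg, rfl⟩; exact ⟨⟨g, hg⟩, rfl⟩
  have h1 : Nat.card H = Nat.card (Subgroup.map (proj Γ S) H) * Nat.card ψ.ker := by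
    rw [Subgroup.card_eq_card_quotient_mul_card_subgroup ψ.ker]
    congr 1
    rw [← hrange]
    exact Nat.card_congr (QuotientGroup.quotientKerEquivRange ψ).toEquiv
  have hker_equiv : Nat.card ψ.ker = Nat.card (H ⊓ K : Subgroup (∀ y, Γ y)) := by
    refine Nat.card_congr
      ⟨fun h => ⟨h.1.1, Subgroup.mem_inf.2 ⟨h.1.2,
          MonoidHom.mem_ker.2 (MonoidHom.mem_ker.1 h.2)⟩⟩,
        fun g => ⟨⟨g.1, (Subgroup.mem_inf.1 g.2).1⟩,
          MonoidHom.mem_ker.2 (MonoidHom.mem_ker.1 (Subgroup.mem_inf.1 g.2).2)⟩, ?_, ?_⟩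
    · intro h; rfl
    · intro g; rfl
  have hKx : Nat.card K = Nat.card (Γ x) := card_ker_proj x
  have hpos : 0 < Nat.card (Subgroup.map (proj Γ S) H) := Nat.card_pos
  constructor
  · intro hcard
    have heq : Nat.card ψ.ker = Nat.card (Γ x) := by
      have := h1.symm.trans hcard
      exact Nat.eq_of_mul_eq_mul_left hpos this
    have hcardK : Nat.card K ≤ Nat.card (H ⊓ K : Subgroup (∀ y, Γ y)) := by
      rw [← hker_equiv, heq, hKx]
    have heqK : H ⊓ K = K := Subgroup.eq_of_le_of_card_ge inf_le_right hcardK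
    intro g hg
    rw [← heqK] at hg
    exact hg.1
  · intro hle
    have : H ⊓ K = K := by rw [inf_eq_right.2 hle]
    rw [h1, hker_equiv, this, hKx]

end GroupAux

/-- `x` is a coloop of `P(H)` (i.e. `|H| = |H_{E∖{x}}|·|Γ_x|`)
iff every irreducible constituent of the permutation representation `ℂ[G/H]`
is trivial on the `x`-th coordinate subgroup. -/
theorem stmt14 {E : Type} [Fintype E] [DecidableEq E]
    (Γ : E → Type) [∀ y, Group (Γ y)] [∀ y, Fintype (Γ y)]
    (H : Subgroup (∀ y, Γ y)) (x : E) :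
    Nat.card H =
        Nat.card (Subgroup.map (proj Γ (Finset.univ.erase x)) H) * Nat.card (Γ x) ↔
      ∀ (V : Type) [AddCommGroup V] [Module ℂ V] [FiniteDimensional ℂ V]
        (ρ : Representation ℂ (∀ y, Γ y) V), IsIrred ρ →
        Occurs ρ (Representation.ofMulAction ℂ (∀ y, Γ y) ((∀ y, Γ y) ⧸ H)) →
        ∀ g : ∀ y, Γ y, (∀ y, y ≠ x → g y = 1) → ρ g = 1 := by
  classical
  set G := ∀ y, Γ y
  set σ := Representation.ofMulAction ℂ G (G ⧸ H) with hσdef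
  rw [card_count_iff x H]
  constructor
  · -- coloop ⇒ all constituents trivial at x
    intro hK V _ _ _ ρ hirr hocc g hg
    have hgK : g ∈ (proj Γ (Finset.univ.erase x)).ker := (mem_ker_proj_iff x g).2 hg
    -- σ g = 1
    have hσg : σ g = 1 := by
      refine MonoidAlgebra.lhom_ext' fun a => LinearMap.ext fun b => ?_
      show σ g (MonoidAlgebra.single a b) = (1 : Module.End ℂ _) (MonoidAlgebra.single a b)
      obtain ⟨c, rfl⟩ := QuotientGroup.mk_surjective a
      rw [hσdef, Representation.ofMulAction_single, Module.End.one_apply,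
        MulAction.Quotient.smul_mk]
      have hmk : (QuotientGroup.mk (g • c) : G ⧸ H) = QuotientGroup.mk c := by
        rw [QuotientGroup.eq]
        have hmem : (g • c)⁻¹ * c ∈ (proj Γ (Finset.univ.erase x)).ker := by
          rw [mem_ker_proj_iff]
          intro y hy
          have hgy : g y = 1 := hg y hy
          show ((g * c)⁻¹ * c) y = 1
          have h1 : ((g * c)⁻¹ * c) y = ((g y) * (c y))⁻¹ * c y := rfl
          rw [h1, hgy, one_mul, inv_mul_cancel]
        exact hK hmem
      rw [hmk]
    obtain ⟨f, hf0, hfe⟩ := hocc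
    have hker : LinearMap.ker f = ⊥ := by
      have hinv : ∀ g' : ∀ y, Γ y, ∀ v ∈ LinearMap.ker f, ρ g' v ∈ LinearMap.ker f := by
        intro g' v hv
        rw [LinearMap.mem_ker] at hv ⊢
        have hcomm := LinearMap.ext_iff.1 (hfe g') v
        simp only [LinearMap.comp_apply] at hcomm
        rw [hcomm, hv, map_zero]
      rcases hirr.2 (LinearMap.ker f) hinv with h | h
      · exact h
      · exact absurd (LinearMap.ker_eq_top.1 h) hf0
    have hinj : Function.Injective f := LinearMap.ker_eq_bot.1 hker
    refine LinearMap.ext fun v => ?_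
    apply hinj
    have := LinearMap.ext_iff.1 (hfe g) v
    simp only [LinearMap.comp_apply] at this
    rw [Module.End.one_apply, this, hσg, Module.End.one_apply]
  · -- all constituents trivial at x ⇒ coloop
    intro hrhs
    by_contra hnle
    obtain ⟨g₀, hg₀K, hg₀H⟩ := SetLike.not_le_iff_exists.1 hnle
    have hg₀x : ∀ y, y ≠ x → g₀ y = 1 := (mem_ker_proj_iff x g₀).1 hg₀K
    -- σ g₀ ≠ 1
    have hσg₀ : σ g₀ ≠ 1 := by
      intro h
      have h1 : σ g₀ (MonoidAlgebra.single ((1 : G) : G ⧸ H) (1 : ℂ)) =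
          MonoidAlgebra.single ((1 : G) : G ⧸ H) (1 : ℂ) := by rw [h, Module.End.one_apply]
      rw [hσdef, Representation.ofMulAction_single, MulAction.Quotient.smul_mk] at h1
      have hne : (QuotientGroup.mk (g₀ • (1 : G)) : G ⧸ H) ≠ QuotientGroup.mk (1 : G) := by
        refine fun h' => hg₀H ?_
        rw [QuotientGroup.eq] at h'
        have he : (g₀ • (1 : G))⁻¹ * 1 = g₀⁻¹ := by
          show (g₀ * 1)⁻¹ * 1 = g₀⁻¹; group
        rw [he] at h'
        exact inv_mem_iff.1 h'
      rw [MonoidAlgebra.single_inj] at h1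
      rcases h1 with ⟨h', -⟩ | ⟨h', -⟩
      · exact hne h'
      · exact one_ne_zero h'
    obtain ⟨W, hW_invt, hW_nt, hW_min, w, hwW, hw⟩ :=
      exists_min_invt_not_fixed σ g₀ hσg₀
    set ρ := resRep σ W hW_invt with hρdef
    have hirr : IsIrred ρ := by
      refine ⟨hW_nt, fun p hp => ?_⟩
      have hmap_invt : Invt σ (p.map W.subtype) := by
        intro g v hv
        obtain ⟨u, hu, rfl⟩ := hv
        exact ⟨ρ g u, hp g u hu, rfl⟩
      have hmaple : p.map W.subtype ≤ W := by
        rintro v ⟨u, _, rfl⟩; exact u.2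
      rcases hW_min (p.map W.subtype) hmaple hmap_invt with h | h
      · left
        refine (Submodule.eq_bot_iff _).2 fun u hu => ?_
        have hmem : (↑u : MonoidAlgebra ℂ (G ⧸ H)) ∈ p.map W.subtype := ⟨u, hu, rfl⟩
        rw [h] at hmem
        exact Subtype.ext hmem
      · right
        rw [eq_top_iff]
        intro u _
        have hmem : (↑u : MonoidAlgebra ℂ (G ⧸ H)) ∈ p.map W.subtype := by rw [h]; exact u.2
        obtain ⟨u', hu', he⟩ := Submodule.mem_map.1 hmem
        rwa [Subtype.ext he] at hu'
    have hocc : Occurs ρ σ := by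
      refine ⟨W.subtype, ?_, fun g => ?_⟩
      · intro h0
        obtain ⟨u, hu⟩ := exists_ne (0 : W)
        apply hu
        have : W.subtype u = 0 := by rw [h0]; rfl
        exact Subtype.ext (by simpa using this)
      · rfl
    have hres := hrhs W ρ hirr hocc g₀ hg₀x
    apply hw
    have h2 : ρ g₀ ⟨w, hwW⟩ = ⟨w, hwW⟩ := by rw [hres, Module.End.one_apply]
    have h3 : σ g₀ w = ((ρ g₀ ⟨w, hwW⟩ : W) : MonoidAlgebra ℂ (G ⧸ H)) := rfl
    rw [h3, h2]
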